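/- If [H,G] is a Boolean group-complemented interval of finite groups, then the dual Euler totient equals the Euler totient: ∑_{K ∈ [H,G]} μ(H,K)·|G:K| = ∑_{K ∈ [H,G]} μ(K,G)·|K:H|. -/

import Mathlib

open Pointwise

set_option maxHeartbeats 1000000 in
/-- For a Boolean group-complemented interval `[H,G]`, the dual Euler totient equals the
Euler totient: `∑_{K ∈ [H,G]} μ(H,K)·|G:K| = ∑_{K ∈ [H,G]} μ(K,G)·|K:H|`. Here `μdown K`
is the Möbius function `μ(H,K)` and `μup K` is `μ(K,G)`, each characterized by the usual
recursion. -/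
theorem dual_euler_totient_eq_euler_totient_of_group_complemented
    (G : Type*) [Group G] [Fintype G] (H : Subgroup G)
    (hBool : ∃ n : ℕ, Nonempty ((Set.Icc H (⊤ : Subgroup G)) ≃o Set (Fin n)))
    (hcompl : ∀ K ∈ Set.Icc H (⊤ : Subgroup G), ∃ Kc ∈ Set.Icc H (⊤ : Subgroup G),
      K ⊓ Kc = H ∧ K ⊔ Kc = ⊤ ∧ (K : Set G) * (Kc : Set G) = Set.univ)
    (μdown : Subgroup G → ℤ) (hμdownH : μdown H = 1)
    (hμdown : ∀ K : Subgroup G, H < K → ∑ᶠ L ∈ Set.Icc H K, μdown L = 0)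
    (μup : Subgroup G → ℤ) (hμupTop : μup ⊤ = 1)
    (hμup : ∀ K : Subgroup G, H ≤ K → K < ⊤ → ∑ᶠ L ∈ Set.Icc K (⊤ : Subgroup G), μup L = 0) :
    ∑ᶠ K ∈ Set.Icc H (⊤ : Subgroup G), μdown K * (K.index : ℤ) =
      ∑ᶠ K ∈ Set.Icc H (⊤ : Subgroup G), μup K * (H.relIndex K : ℤ) := by
  classical
  set S : Set (Subgroup G) := Set.Icc H (⊤ : Subgroup G) with hS
  obtain ⟨n, ⟨e⟩⟩ := hBool
  -- choose complements
  have hcc : ∀ K : Subgroup G, ∃ Kc, K ∈ S → Kc ∈ S ∧ K ⊓ Kc = H ∧ K ⊔ Kc = ⊤ ∧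
      (K : Set G) * (Kc : Set G) = Set.univ := by
    intro K
    by_cases hK : K ∈ S
    · obtain ⟨Kc, h1, h2, h3, h4⟩ := hcompl K hK
      exact ⟨Kc, fun _ => ⟨h1, h2, h3, h4⟩⟩
    · exact ⟨⊤, fun h => absurd h hK⟩
  choose c hc using hcc
  have hmemS : ∀ {K : Subgroup G}, K ∈ S ↔ H ≤ K := by
    intro K; simp [hS, Set.mem_Icc]
  have hcS : ∀ {K : Subgroup G}, K ∈ S → c K ∈ S := fun hK => (hc _ hK).1
  have hcinf : ∀ {K : Subgroup G}, K ∈ S → K ⊓ c K = H := fun hK => (hc _ hK).2.1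
  have hcsup : ∀ {K : Subgroup G}, K ∈ S → K ⊔ c K = ⊤ := fun hK => (hc _ hK).2.2.1
  have hcmul : ∀ {K : Subgroup G}, K ∈ S →
      (K : Set G) * (c K : Set G) = Set.univ := fun hK => (hc _ hK).2.2.2
  have hHS : H ∈ S := hmemS.mpr le_rfl
  have hTS : (⊤ : Subgroup G) ∈ S := hmemS.mpr le_top
  have hinfS : ∀ {x y : Subgroup G}, x ∈ S → y ∈ S → x ⊓ y ∈ S := by
    intro x y hx hy
    exact hmemS.mpr (le_inf (hmemS.mp hx) (hmemS.mp hy))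
  have hsupS : ∀ {x y : Subgroup G}, x ∈ S → y ∈ S → x ⊔ y ∈ S := by
    intro x y hx hy
    exact hmemS.mpr (le_trans (hmemS.mp hx) le_sup_left)
  -- the order iso sends inf to inf, sup to sup, H to ⊥, ⊤ to ⊤
  have einf : ∀ (x y : Subgroup G) (hx : x ∈ S) (hy : y ∈ S),
      e ⟨x ⊓ y, hinfS hx hy⟩ = e ⟨x, hx⟩ ⊓ e ⟨y, hy⟩ := by
    intro x y hx hy
    apply le_antisymm
    · exact le_inf (e.monotone (Subtype.mk_le_mk.mpr inf_le_left))
        (e.monotone (Subtype.mk_le_mk.mpr inf_le_right))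
    · set w := e.symm (e ⟨x, hx⟩ ⊓ e ⟨y, hy⟩) with hw
      have hx1 : w ≤ ⟨x, hx⟩ := by
        calc w ≤ e.symm (e ⟨x, hx⟩) := e.symm.monotone inf_le_left
          _ = ⟨x, hx⟩ := e.symm_apply_apply _
      have hy1 : w ≤ ⟨y, hy⟩ := by
        calc w ≤ e.symm (e ⟨y, hy⟩) := e.symm.monotone inf_le_right
          _ = ⟨y, hy⟩ := e.symm_apply_apply _
      have h1 : w ≤ ⟨x ⊓ y, hinfS hx hy⟩ :=
        Subtype.coe_le_coe.mp (le_inf (Subtype.coe_le_coe.mpr hx1) (Subtype.coe_le_coe.mpr hy1))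
      calc e ⟨x, hx⟩ ⊓ e ⟨y, hy⟩ = e w := (e.apply_symm_apply _).symm
        _ ≤ e ⟨x ⊓ y, hinfS hx hy⟩ := e.monotone h1
  have esup : ∀ (x y : Subgroup G) (hx : x ∈ S) (hy : y ∈ S),
      e ⟨x ⊔ y, hsupS hx hy⟩ = e ⟨x, hx⟩ ⊔ e ⟨y, hy⟩ := by
    intro x y hx hy
    apply le_antisymm
    · set w := e.symm (e ⟨x, hx⟩ ⊔ e ⟨y, hy⟩) with hw
      have hx1 : (⟨x, hx⟩ : S) ≤ w := by
        calc (⟨x, hx⟩ : S) = e.symm (e ⟨x, hx⟩) := (e.symm_apply_apply _).symm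
          _ ≤ w := e.symm.monotone le_sup_left
      have hy1 : (⟨y, hy⟩ : S) ≤ w := by
        calc (⟨y, hy⟩ : S) = e.symm (e ⟨y, hy⟩) := (e.symm_apply_apply _).symm
          _ ≤ w := e.symm.monotone le_sup_right
      have h1 : (⟨x ⊔ y, hsupS hx hy⟩ : S) ≤ w :=
        Subtype.coe_le_coe.mp (sup_le (Subtype.coe_le_coe.mpr hx1) (Subtype.coe_le_coe.mpr hy1))
      calc e ⟨x ⊔ y, hsupS hx hy⟩ ≤ e w := e.monotone h1
        _ = e ⟨x, hx⟩ ⊔ e ⟨y, hy⟩ := e.apply_symm_apply _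
    · exact sup_le (e.monotone (Subtype.mk_le_mk.mpr le_sup_left))
        (e.monotone (Subtype.mk_le_mk.mpr le_sup_right))
  have ebot : e ⟨H, hHS⟩ = ⊥ := by
    apply le_bot_iff.mp
    calc e ⟨H, hHS⟩ ≤ e (e.symm ⊥) :=
          e.monotone (Subtype.coe_le_coe.mp (hmemS.mp (e.symm ⊥).2))
      _ = ⊥ := e.apply_symm_apply _
  have etop : e ⟨(⊤ : Subgroup G), hTS⟩ = ⊤ := by
    apply top_le_iff.mp
    calc (⊤ : Set (Fin n)) = e (e.symm ⊤) := (e.apply_symm_apply _).symm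
      _ ≤ e ⟨(⊤ : Subgroup G), hTS⟩ := e.monotone (Subtype.coe_le_coe.mp le_top)
  -- key: e maps complement to set complement
  have ecompl : ∀ (K : Subgroup G) (hK : K ∈ S),
      e ⟨c K, hcS hK⟩ = (e ⟨K, hK⟩)ᶜ := by
    intro K hK
    have h1 : e ⟨K, hK⟩ ⊓ e ⟨c K, hcS hK⟩ = ⊥ := by
      rw [← einf K (c K) hK (hcS hK), ← ebot]
      congr 1
      exact Subtype.ext (hcinf hK)
    have h2 : e ⟨K, hK⟩ ⊔ e ⟨c K, hcS hK⟩ = ⊤ := by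
      rw [← esup K (c K) hK (hcS hK), ← etop]
      congr 1
      exact Subtype.ext (hcsup hK)
    exact ((isCompl_iff.mpr ⟨disjoint_iff.mpr h1, codisjoint_iff.mpr h2⟩).compl_eq).symm
  -- consequences
  have cinvol : ∀ {K : Subgroup G}, K ∈ S → c (c K) = K := by
    intro K hK
    have : e ⟨c (c K), hcS (hcS hK)⟩ = e ⟨K, hK⟩ := by
      rw [ecompl _ (hcS hK), ecompl _ hK, compl_compl]
    exact congrArg Subtype.val (e.injective this)
  have cantitone : ∀ {K L : Subgroup G}, K ∈ S → L ∈ S → K ≤ L → c L ≤ c K := by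
    intro K L hK hL hKL
    have h1 : e ⟨c L, hcS hL⟩ ≤ e ⟨c K, hcS hK⟩ := by
      rw [ecompl _ hK, ecompl _ hL]
      exact compl_le_compl (e.monotone (Subtype.mk_le_mk.mpr hKL))
    exact Subtype.mk_le_mk.mp (e.le_iff_le.mp h1)
  have cH : c H = ⊤ := by
    have h1 : e ⟨c H, hcS hHS⟩ = e ⟨(⊤ : Subgroup G), hTS⟩ := by
      rw [ecompl _ hHS, ebot, compl_bot, etop]
    exact congrArg Subtype.val (e.injective h1)
  have cT : c ⊤ = H := by
    have h1 := cinvol hHS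
    rw [cH] at h1; exact h1
  -- index identity: for K ∈ S, K.index = H.relIndex (c K)
  have hindex : ∀ {K : Subgroup G}, K ∈ S → K.index = H.relIndex (c K) := by
    intro K hK
    have hmul : ((c K : Subgroup G) : Set G) * (K : Set G) = Set.univ := by
      have h0 := hcmul hK
      have h2 := congrArg (· ⁻¹) h0
      simpa [mul_inv_rev] using h2
    have hrel : K.relIndex (c K) = K.index := by
      rw [Subgroup.relIndex, Subgroup.index_eq_card, Subgroup.index_eq_card]
      apply Nat.card_congr
      refine Equiv.ofBijective (Quotient.map' (Subtype.val) ?_) ⟨?_, ?_⟩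
      · intro a b hab
        rw [QuotientGroup.leftRel_apply] at *
        rw [Subgroup.mem_subgroupOf] at hab
        exact hab
      · intro a b
        induction a using Quotient.inductionOn'
        induction b using Quotient.inductionOn'
        intro hab
        simp only [Quotient.map'_mk''] at hab
        apply Quotient.sound'
        rw [QuotientGroup.leftRel_apply, Subgroup.mem_subgroupOf]
        have h3 := Quotient.exact' hab
        rw [QuotientGroup.leftRel_apply] at h3
        exact h3
      · intro g
        induction g using Quotient.inductionOn'
        rename_i g
        have hg : g ∈ ((c K : Subgroup G) : Set G) * (K : Set G) := by
          rw [hmul]; trivial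
        obtain ⟨x, hx, y, hy, hxy⟩ := Set.mem_mul.mp hg
        refine ⟨Quotient.mk'' ⟨x, hx⟩, ?_⟩
        simp only [Quotient.map'_mk'']
        apply Quotient.sound'
        rw [QuotientGroup.leftRel_apply]
        have h4 : x⁻¹ * g = y := by rw [← hxy]; group
        rw [h4]; exact hy
    calc K.index = K.relIndex (c K) := hrel.symm
      _ = (K ⊓ c K).relIndex (c K) := (Subgroup.inf_relIndex_right K (c K)).symm
      _ = H.relIndex (c K) := by rw [hcinf hK]
  -- Möbius identity: μdown K = μup (c K) on S, by strong induction on card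
  have cardlt : ∀ {K L : Subgroup G}, K < L → Nat.card K < Nat.card L := by
    intro K L h
    have h1 : (K : Set G).ncard < (L : Set G).ncard :=
      Set.ncard_lt_ncard (SetLike.coe_ssubset_coe.mpr h) (Set.toFinite _)
    exact h1
  have key : ∀ m : ℕ, ∀ K, K ∈ S → Nat.card K ≤ m → μdown K = μup (c K) := by
    intro m
    induction m with
    | zero =>
      intro K hK h0
      exact absurd (Nat.le_zero.mp h0) (Nat.card_pos).ne'
    | succ m ih =>
      intro K hK hcard
      by_cases hKH : K = H
      · subst hKH; rw [hμdownH, cH, hμupTop]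
      · have hHK : H < K := lt_of_le_of_ne (hmemS.mp hK) (Ne.symm hKH)
        have hcKT : c K < ⊤ := by
          refine lt_of_le_of_ne le_top ?_
          intro hceq
          have h5 : c (c K) = c ⊤ := by rw [hceq]
          rw [cinvol hK, cT] at h5
          exact hKH h5
        have hsum1 := hμdown K hHK
        have hsum2 := hμup (c K) (hmemS.mp (hcS hK)) hcKT
        have hf1 : (Set.Icc H K).Finite := Set.toFinite _
        have hf2 : (Set.Icc (c K) (⊤ : Subgroup G)).Finite := Set.toFinite _
        rw [finsum_mem_eq_finite_toFinset_sum _ hf1] at hsum1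
        rw [finsum_mem_eq_finite_toFinset_sum _ hf2] at hsum2
        have hmem1 : ∀ {L : Subgroup G}, L ∈ hf1.toFinset → L ∈ S := by
          intro L hL
          rw [Set.Finite.mem_toFinset, Set.mem_Icc] at hL
          exact hmemS.mpr hL.1
        have hbij : ∑ L ∈ hf1.toFinset, μup (c L) = ∑ M ∈ hf2.toFinset, μup M := by
          apply Finset.sum_nbij' (i := c) (j := c)
          · intro L hL
            have hLS := hmem1 hL
            rw [Set.Finite.mem_toFinset, Set.mem_Icc] at hL ⊢
            exact ⟨cantitone hLS hK hL.2, le_top⟩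
          · intro M hM
            rw [Set.Finite.mem_toFinset, Set.mem_Icc] at hM ⊢
            have hMS : M ∈ S := hmemS.mpr (le_trans (hmemS.mp (hcS hK)) hM.1)
            constructor
            · exact hmemS.mp (hcS hMS)
            · have h6 := cantitone (hcS hK) hMS hM.1
              rwa [cinvol hK] at h6
          · intro L hL; exact cinvol (hmem1 hL)
          · intro M hM
            rw [Set.Finite.mem_toFinset, Set.mem_Icc] at hM
            exact cinvol (hmemS.mpr (le_trans (hmemS.mp (hcS hK)) hM.1))
          · intro L hL; rfl
        have hKmem : K ∈ hf1.toFinset := by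
          rw [Set.Finite.mem_toFinset, Set.mem_Icc]; exact ⟨hmemS.mp hK, le_rfl⟩
        have e1 := Finset.add_sum_erase hf1.toFinset μdown hKmem
        have e2 := Finset.add_sum_erase hf1.toFinset (fun L => μup (c L)) hKmem
        have hIH : ∀ L ∈ hf1.toFinset.erase K, μdown L = μup (c L) := by
          intro L hL
          obtain ⟨hLne, hLmem⟩ := Finset.mem_erase.mp hL
          have hLS := hmem1 hLmem
          rw [Set.Finite.mem_toFinset, Set.mem_Icc] at hLmem
          have hLK : L < K := lt_of_le_of_ne hLmem.2 hLne
          exact ih L hLS (Nat.lt_succ_iff.mp (lt_of_lt_of_le (cardlt hLK) hcard))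
        have hAB : ∑ L ∈ hf1.toFinset.erase K, μdown L
            = ∑ L ∈ hf1.toFinset.erase K, μup (c L) := Finset.sum_congr rfl hIH
        linarith [e1, e2, hsum1, hsum2, hbij, hAB]
  have hkey : ∀ K ∈ S, μdown K = μup (c K) := fun K hK =>
    key (Nat.card K) K hK le_rfl
  -- final reindexing
  have hfS : S.Finite := Set.toFinite _
  rw [finsum_mem_eq_finite_toFinset_sum _ hfS, finsum_mem_eq_finite_toFinset_sum _ hfS]
  apply Finset.sum_nbij' (i := c) (j := c)
  · intro K hK
    rw [Set.Finite.mem_toFinset] at hK ⊢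
    exact hcS hK
  · intro K hK
    rw [Set.Finite.mem_toFinset] at hK ⊢
    exact hcS hK
  · intro K hK
    rw [Set.Finite.mem_toFinset] at hK
    exact cinvol hK
  · intro K hK
    rw [Set.Finite.mem_toFinset] at hK
    exact cinvol hK
  · intro K hK
    rw [Set.Finite.mem_toFinset] at hK
    rw [hkey K hK, hindex hK]
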